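/- Let (Ω, F, ℙ) be a probability space, let P : Ω → ℝ be square-integrable, and let (P_ℓ)_{ℓ∈ℕ} be square-integrable real random variables on Ω (approximations of P on level ℓ), with the convention P_{-1} := 0. Let (C_ℓ)_{ℓ∈ℕ} be nonnegative reals (the cost of one sample of the difference P_ℓ − P_{ℓ−1}). Suppose there are positive constants α, β, γ, c₁, c₂, c₃ with α ≥ (1/2)·min(β, γ) such that for all ℓ ∈ ℕ: (1) |E[P_ℓ − P]| ≤ c₁·2^{−αℓ}; (2) Var[P_ℓ − P_{ℓ−1}] ≤ c₂·2^{−βℓ}; (3) C_ℓ ≤ c₃·2^{γℓ}. Then there exists a positive constant c₄ such that for every ε with 0 < ε < exp(−1) there exist L ∈ ℕ and positive integers N₀, …, N_L with the following property: for every family of real random variables (Y_ℓ^{(n)})_{0 ≤ ℓ ≤ L, 1 ≤ n ≤ N_ℓ} on Ω that is jointly independent and such that each Y_ℓ^{(n)} is identically distributed as P_ℓ − P_{ℓ−1}, the multilevel Monte Carlo estimator Q := ∑_{ℓ=0}^{L} (1/N_ℓ) ∑_{n=1}^{N_ℓ} Y_ℓ^{(n)} satisfies the mean square error bound E[(Q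 − E[P])²] ≤ ε², and the total cost satisfies ∑_{ℓ=0}^{L} N_ℓ·C_ℓ ≤ c₄·ε^{−2} if β > γ, ∑_{ℓ=0}^{L} N_ℓ·C_ℓ ≤ c₄·ε^{−2}·(log ε)² if β = γ, and ∑_{ℓ=0}^{L} N_ℓ·C_ℓ ≤ c₄·ε^{−2−(γ−β)/α} if β < γ. -/

import Mathlib

set_option maxHeartbeats 2000000

open MeasureTheory ProbabilityTheory Finset

private lemma mlmc_pow_pow (c : ℝ) (ℓ : ℕ) : ((2:ℝ) ^ c) ^ ℓ = (2:ℝ) ^ (c * ℓ) := by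
  rw [← Real.rpow_natCast ((2:ℝ) ^ c) ℓ, ← Real.rpow_mul (by norm_num)]

/-- The multilevel Monte Carlo complexity theorem (Giles). Under the assumptions
(1) `|E[P_ℓ - P]| ≤ c₁·2^{-αℓ}`, (2) `Var[P_ℓ - P_{ℓ-1}] ≤ c₂·2^{-βℓ}` (with
`P_{-1} := 0`) and (3) `C_ℓ ≤ c₃·2^{γℓ}`, where `α ≥ (1/2)·min(β,γ)`, there is a
constant `c₄ > 0` such that for every `0 < ε < e⁻¹` there are a number of levels `L`
and sample sizes `N₀, …, N_L ≥ 1` such that every MLMC estimator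
`Q = ∑_{ℓ=0}^{L} (1/N_ℓ) ∑_{n=1}^{N_ℓ} Y_ℓ⁽ⁿ⁾` built from jointly independent
square-integrable samples `Y_ℓ⁽ⁿ⁾` identically distributed as `P_ℓ - P_{ℓ-1}`
has mean square error `E[(Q - E[P])²] ≤ ε²`, while the total cost `∑ N_ℓ C_ℓ` is
bounded by `c₄ε⁻²` if `β > γ`, by `c₄ε⁻²(log ε)²` if `β = γ`, and by
`c₄ε^{-2-(γ-β)/α}` if `β < γ`. -/
theorem mlmc_complexity
    {Ω : Type*} [MeasurableSpace Ω] (μ : Measure Ω) [IsProbabilityMeasure μ]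
    (P : Ω → ℝ) (Pl : ℕ → Ω → ℝ) (C : ℕ → ℝ)
    (hP : MeasureTheory.MemLp P 2 μ) (hPl : ∀ ℓ, MeasureTheory.MemLp (Pl ℓ) 2 μ)
    (hC : ∀ ℓ, 0 ≤ C ℓ)
    (α β γ c₁ c₂ c₃ : ℝ)
    (hα : 0 < α) (hβ : 0 < β) (hγ : 0 < γ)
    (hc₁ : 0 < c₁) (hc₂ : 0 < c₂) (hc₃ : 0 < c₃)
    (hαβγ : (1 / 2) * min β γ ≤ α)
    (h1 : ∀ ℓ : ℕ, |∫ ω, (Pl ℓ ω - P ω) ∂μ| ≤ c₁ * (2 : ℝ) ^ (-(α * ℓ)))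
    (h2 : ∀ ℓ : ℕ,
      variance (fun ω => if ℓ = 0 then Pl 0 ω else Pl ℓ ω - Pl (ℓ - 1) ω) μ
        ≤ c₂ * (2 : ℝ) ^ (-(β * ℓ)))
    (h3 : ∀ ℓ : ℕ, C ℓ ≤ c₃ * (2 : ℝ) ^ (γ * ℓ)) :
    ∃ c₄ : ℝ, 0 < c₄ ∧
      ∀ ε : ℝ, 0 < ε → ε < Real.exp (-1) →
        ∃ (L : ℕ) (N : ℕ → ℕ),
          (∀ ℓ ≤ L, 0 < N ℓ) ∧
          (∀ Y : ℕ → ℕ → Ω → ℝ,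
            (∀ ℓ ≤ L, ∀ n < N ℓ, MeasureTheory.MemLp (Y ℓ n) 2 μ) →
            iIndepFun
              (fun p : {q : ℕ × ℕ // q.1 ≤ L ∧ q.2 < N q.1} => Y p.1.1 p.1.2) μ →
            (∀ ℓ ≤ L, ∀ n < N ℓ,
              IdentDistrib (Y ℓ n)
                (fun ω => if ℓ = 0 then Pl 0 ω else Pl ℓ ω - Pl (ℓ - 1) ω) μ μ) →
            ∫ ω, ((∑ ℓ ∈ Finset.range (L + 1),
                (1 / (N ℓ : ℝ)) * ∑ n ∈ Finset.range (N ℓ), Y ℓ n ω)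
                - ∫ ω', P ω' ∂μ) ^ 2 ∂μ ≤ ε ^ 2) ∧
          ((β > γ →
              ∑ ℓ ∈ Finset.range (L + 1), (N ℓ : ℝ) * C ℓ ≤ c₄ * ε ^ (-2 : ℝ)) ∧
           (β = γ →
              ∑ ℓ ∈ Finset.range (L + 1), (N ℓ : ℝ) * C ℓ
                ≤ c₄ * ε ^ (-2 : ℝ) * Real.log ε ^ 2) ∧
           (β < γ →
              ∑ ℓ ∈ Finset.range (L + 1), (N ℓ : ℝ) * C ℓ
                ≤ c₄ * ε ^ (-2 - (γ - β) / α))) := by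
  classical
  have two_ne_one : (2:ℝ) ≠ 1 := by norm_num
  -- preliminaries about the level differences
  set diff : ℕ → Ω → ℝ := fun ℓ ω => if ℓ = 0 then Pl 0 ω else Pl ℓ ω - Pl (ℓ - 1) ω
    with hdiffd
  have hdiffMem : ∀ ℓ, MemLp (diff ℓ) 2 μ := by
    intro ℓ
    cases ℓ with
    | zero => simpa [hdiffd] using hPl 0
    | succ k =>
      simp only [hdiffd, Nat.succ_ne_zero, if_false, Nat.add_sub_cancel]
      exact (hPl (k+1)).sub (hPl k)
  have htel : ∀ Lk : ℕ, ∑ ℓ ∈ range (Lk+1), ∫ ω, diff ℓ ω ∂μ = ∫ ω, Pl Lk ω ∂μ := by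
    intro Lk
    induction Lk with
    | zero => simp [hdiffd]
    | succ k ih =>
      rw [Finset.sum_range_succ, ih]
      have hstep : ∫ ω, diff (k+1) ω ∂μ = (∫ ω, Pl (k+1) ω ∂μ) - ∫ ω, Pl k ω ∂μ := by
        simp only [hdiffd, Nat.succ_ne_zero, if_false, Nat.add_sub_cancel]
        exact integral_sub ((hPl (k+1)).integrable one_le_two)
          ((hPl k).integrable one_le_two)
      rw [hstep]
      ring
  obtain ⟨m, hm⟩ : ∃ m : ℝ, m = ∫ ω, P ω ∂μ := ⟨_, rfl⟩
  have hbias : ∀ Lk : ℕ, |(∫ ω, Pl Lk ω ∂μ) - m| ≤ c₁ * (2:ℝ) ^ (-(α * Lk)) := by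
    intro Lk
    have h := h1 Lk
    rw [hm]
    rwa [integral_sub ((hPl Lk).integrable one_le_two) (hP.integrable one_le_two)] at h
  -- constants
  set t : ℝ := (2:ℝ) ^ γ with ht
  set r : ℝ := (2:ℝ) ^ ((γ - β)/2) with hr
  set B : ℝ := 2 ^ (α:ℝ) * (Real.sqrt 2 * c₁ + 1) with hB
  set A : ℝ := (max (Real.log (Real.sqrt 2 * c₁)) 0 + 1)/(α * Real.log 2) + 2 with hA
  clear_value t r B A
  have ht1 : 1 < t := by
    rw [ht, show (1:ℝ) = (2:ℝ) ^ (0:ℝ) by simp]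
    exact Real.rpow_lt_rpow_of_exponent_lt one_lt_two hγ
  have hrpos : 0 < r := by rw [hr]; exact Real.rpow_pos_of_pos two_pos _
  have h2a : (1:ℝ) ≤ 2 ^ (α:ℝ) := by
    rw [show (1:ℝ) = (2:ℝ) ^ (0:ℝ) by simp]
    exact Real.rpow_le_rpow_of_exponent_le one_le_two hα.le
  have hB1 : 1 ≤ B := by
    have h2' : (0:ℝ) ≤ Real.sqrt 2 * c₁ := by positivity
    rw [hB]; nlinarith
  have hB0 : 0 < B := by linarith
  have hlog2 : 0 < α * Real.log 2 := mul_pos hα (Real.log_pos one_lt_two)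
  have hA2 : 2 ≤ A := by
    have h0 : 0 ≤ (max (Real.log (Real.sqrt 2 * c₁)) 0 + 1)/(α * Real.log 2) := by positivity
    rw [hA]; linarith
  -- the main construction, common to all three cases
  have key : ∀ ε : ℝ, 0 < ε → ε < Real.exp (-1) →
      ∃ (L : ℕ) (N : ℕ → ℕ),
        (∀ ℓ ≤ L, 0 < N ℓ) ∧
        (∀ Y : ℕ → ℕ → Ω → ℝ,
          (∀ ℓ ≤ L, ∀ n < N ℓ, MeasureTheory.MemLp (Y ℓ n) 2 μ) →
          iIndepFun
            (fun p : {q : ℕ × ℕ // q.1 ≤ L ∧ q.2 < N q.1} => Y p.1.1 p.1.2) μ →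
          (∀ ℓ ≤ L, ∀ n < N ℓ,
            IdentDistrib (Y ℓ n)
              (fun ω => if ℓ = 0 then Pl 0 ω else Pl ℓ ω - Pl (ℓ - 1) ω) μ μ) →
          ∫ ω, ((∑ ℓ ∈ Finset.range (L + 1),
              (1 / (N ℓ : ℝ)) * ∑ n ∈ Finset.range (N ℓ), Y ℓ n ω)
              - ∫ ω', P ω' ∂μ) ^ 2 ∂μ ≤ ε ^ 2) ∧
        (∑ ℓ ∈ Finset.range (L + 1), (N ℓ : ℝ) * C ℓ
          ≤ 2 * c₂ * c₃ * (∑ j ∈ range (L+1), r ^ j) ^ 2 / ε ^ 2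
            + c₃ * ∑ j ∈ range (L+1), t ^ j) ∧
        (2:ℝ) ^ (α * (L:ℝ)) ≤ B / ε ∧
        ((L:ℝ) + 1 ≤ A * (-Real.log ε)) := by
    intro ε hε hεe
    have hε1 : ε < 1 := by
      have hlt : Real.exp (-1) < 1 := by
        rw [show (1:ℝ) = Real.exp 0 by simp]
        exact Real.exp_lt_exp.mpr (by norm_num)
      linarith
    set x : ℝ := Real.logb 2 (Real.sqrt 2 * c₁ / ε) / α with hx
    clear_value x
    set L : ℕ := ⌈x⌉₊ with hL
    clear_value L
    set S : ℝ := ∑ j ∈ range (L+1), r ^ j with hS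
    clear_value S
    have hSpos : 0 < S := by
      rw [hS]
      exact Finset.sum_pos (fun j _ => pow_pos hrpos j)
        ⟨0, Finset.mem_range.mpr (Nat.succ_pos L)⟩
    set K : ℝ := 2 * c₂ * S with hK
    clear_value K
    have hKpos : 0 < K := by rw [hK]; positivity
    set w : ℝ := (2:ℝ) ^ (-((β + γ)/2)) with hw
    clear_value w
    have hwpos : 0 < w := hw ▸ Real.rpow_pos_of_pos two_pos _
    set N : ℕ → ℕ := fun ℓ => ⌈K / ε ^ 2 * w ^ ℓ⌉₊ with hN
    clear_value N
    have harg : ∀ ℓ, 0 < K / ε ^ 2 * w ^ ℓ :=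
      fun ℓ => mul_pos (div_pos hKpos (pow_pos hε 2)) (pow_pos hwpos ℓ)
    have hNpos : ∀ ℓ, 0 < N ℓ := fun ℓ => by
      rw [hN]; exact Nat.ceil_pos.mpr (harg ℓ)
    have hNlb : ∀ ℓ, K / ε ^ 2 * w ^ ℓ ≤ (N ℓ : ℝ) := fun ℓ => by
      rw [hN]; exact Nat.le_ceil _
    have hNub : ∀ ℓ, (N ℓ : ℝ) ≤ K / ε ^ 2 * w ^ ℓ + 1 := fun ℓ => by
      rw [hN]; exact (Nat.ceil_lt_add_one (harg ℓ).le).le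
    -- bias bound
    have hbL : c₁ * (2:ℝ) ^ (-(α * L)) ≤ ε / Real.sqrt 2 := by
      have hy : 0 < Real.sqrt 2 * c₁ / ε := by positivity
      have hax : α * x = Real.logb 2 (Real.sqrt 2 * c₁ / ε) := by
        rw [hx]; field_simp
      have hexp : Real.logb 2 (Real.sqrt 2 * c₁ / ε) ≤ α * L := by
        have h := mul_le_mul_of_nonneg_left (Nat.le_ceil x) hα.le
        rw [hax] at h; rw [hL]; exact h
      have h1' : Real.sqrt 2 * c₁ / ε ≤ (2:ℝ) ^ (α * (L:ℝ)) := by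
        calc Real.sqrt 2 * c₁ / ε = (2:ℝ) ^ Real.logb 2 (Real.sqrt 2 * c₁ / ε) :=
              (Real.rpow_logb two_pos two_ne_one hy).symm
          _ ≤ (2:ℝ) ^ (α * (L:ℝ)) := Real.rpow_le_rpow_of_exponent_le one_le_two hexp
      have hu : (0:ℝ) < (2:ℝ) ^ (α * (L:ℝ)) := Real.rpow_pos_of_pos two_pos _
      rw [Real.rpow_neg (by norm_num : (0:ℝ) ≤ 2), ← div_eq_mul_inv,
        div_le_div_iff₀ hu (Real.sqrt_pos.mpr two_pos)]
      rw [div_le_iff₀ hε] at h1'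
      nlinarith [Real.sqrt_nonneg 2]
    -- variance sum bound
    have hVsum : ∑ ℓ ∈ range (L+1), (c₂ * (2:ℝ) ^ (-(β * ℓ))) / (N ℓ : ℝ) ≤ ε ^ 2 / 2 := by
      have hterm : ∀ ℓ ∈ range (L+1),
          (c₂ * (2:ℝ) ^ (-(β * ℓ))) / (N ℓ : ℝ) ≤ c₂ * ε ^ 2 / K * r ^ ℓ := by
        intro ℓ _
        have hstep : (c₂ * (2:ℝ) ^ (-(β * ℓ))) / (N ℓ : ℝ)
            ≤ (c₂ * (2:ℝ) ^ (-(β * ℓ))) / (K / ε ^ 2 * w ^ ℓ) := by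
          apply (div_le_div_iff_of_pos_left (by positivity) (by exact_mod_cast hNpos ℓ)
            (harg ℓ)).mpr (hNlb ℓ)
        refine hstep.trans (le_of_eq ?_)
        have hwl : w ^ ℓ = (2:ℝ) ^ (-((β + γ)/2) * ℓ) := by rw [hw, mlmc_pow_pow]
        have hrl : r ^ ℓ = (2:ℝ) ^ ((γ - β)/2 * ℓ) := by rw [hr, mlmc_pow_pow]
        have hprod : (2:ℝ) ^ ((γ - β)/2 * ℓ) * (2:ℝ) ^ (-((β + γ)/2) * ℓ)
            = (2:ℝ) ^ (-(β * (ℓ:ℝ))) := by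
          rw [← Real.rpow_add two_pos]; congr 1; ring
        rw [hwl, hrl, ← hprod]
        have hp1 : ((2:ℝ) ^ ((γ - β)/2 * ℓ)) ≠ 0 := (Real.rpow_pos_of_pos two_pos _).ne'
        have hp2 : ((2:ℝ) ^ (-((β + γ)/2) * ℓ)) ≠ 0 := (Real.rpow_pos_of_pos two_pos _).ne'
        field_simp
      calc ∑ ℓ ∈ range (L+1), (c₂ * (2:ℝ) ^ (-(β * ℓ))) / (N ℓ : ℝ)
          ≤ ∑ ℓ ∈ range (L+1), c₂ * ε ^ 2 / K * r ^ ℓ := Finset.sum_le_sum hterm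
        _ = c₂ * ε ^ 2 / K * S := by rw [hS, ← Finset.mul_sum]
        _ = ε ^ 2 / 2 := by rw [hK]; field_simp
    -- cost bound
    have hwt : w * t = r := by
      rw [hw, ht, hr, ← Real.rpow_add two_pos]; congr 1; ring
    have hcost : ∑ ℓ ∈ range (L+1), (N ℓ : ℝ) * C ℓ
        ≤ 2 * c₂ * c₃ * S ^ 2 / ε ^ 2 + c₃ * ∑ j ∈ range (L+1), t ^ j := by
      have hterm : ∀ ℓ ∈ range (L+1),
          (N ℓ : ℝ) * C ℓ ≤ K * c₃ / ε ^ 2 * r ^ ℓ + c₃ * t ^ ℓ := by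
        intro ℓ _
        have hC' : C ℓ ≤ c₃ * t ^ ℓ := by rw [ht, mlmc_pow_pow]; exact h3 ℓ
        calc (N ℓ : ℝ) * C ℓ ≤ (K / ε ^ 2 * w ^ ℓ + 1) * (c₃ * t ^ ℓ) := by
              apply mul_le_mul (hNub ℓ) hC' (hC ℓ) (by positivity)
          _ = K * c₃ / ε ^ 2 * (w ^ ℓ * t ^ ℓ) + c₃ * t ^ ℓ := by ring
          _ = K * c₃ / ε ^ 2 * r ^ ℓ + c₃ * t ^ ℓ := by rw [← mul_pow, hwt]
      calc ∑ ℓ ∈ range (L+1), (N ℓ : ℝ) * C ℓ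
          ≤ ∑ ℓ ∈ range (L+1), (K * c₃ / ε ^ 2 * r ^ ℓ + c₃ * t ^ ℓ) :=
            Finset.sum_le_sum hterm
        _ = K * c₃ / ε ^ 2 * S + c₃ * ∑ j ∈ range (L+1), t ^ j := by
            rw [Finset.sum_add_distrib, ← Finset.mul_sum, ← Finset.mul_sum, hS]
        _ = 2 * c₂ * c₃ * S ^ 2 / ε ^ 2 + c₃ * ∑ j ∈ range (L+1), t ^ j := by
            rw [hK]; ring
    -- bound on 2^(αL)
    have hL2 : (2:ℝ) ^ (α * (L:ℝ)) ≤ B / ε := by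
      rcases le_or_gt x 0 with hx0 | hx0
      · have hL0 : L = 0 := by rw [hL, Nat.ceil_eq_zero.mpr hx0]
        rw [hL0]
        simp only [Nat.cast_zero, mul_zero, Real.rpow_zero]
        exact (one_le_div hε).mpr (hε1.le.trans hB1)
      · have hxL : (L:ℝ) ≤ x + 1 := by rw [hL]; exact (Nat.ceil_lt_add_one hx0.le).le
        have h1' : α * (L:ℝ) ≤ α * x + α := by nlinarith
        have hax : α * x = Real.logb 2 (Real.sqrt 2 * c₁ / ε) := by rw [hx]; field_simp
        have h2pa : (0:ℝ) < 2 ^ (α:ℝ) := Real.rpow_pos_of_pos two_pos _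
        calc (2:ℝ) ^ (α * (L:ℝ)) ≤ (2:ℝ) ^ (α * x + α) :=
              Real.rpow_le_rpow_of_exponent_le one_le_two h1'
          _ = (Real.sqrt 2 * c₁ / ε) * 2 ^ (α:ℝ) := by
              rw [Real.rpow_add two_pos, hax,
                Real.rpow_logb two_pos two_ne_one (by positivity)]
          _ ≤ B / ε := by
              rw [hB, div_mul_eq_mul_div, div_le_div_iff₀ hε hε]
              nlinarith [Real.sqrt_nonneg 2]
    -- bound on L in terms of log ε
    have hM1 : 1 < -Real.log ε := by
      have h := Real.log_lt_log hε hεe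
      rw [Real.log_exp] at h
      linarith
    have hL3 : (L:ℝ) + 1 ≤ A * (-Real.log ε) := by
      rcases le_or_gt x 0 with hx0 | hx0
      · have hL0 : L = 0 := by rw [hL, Nat.ceil_eq_zero.mpr hx0]
        rw [hL0]
        simp only [Nat.cast_zero, zero_add]
        nlinarith
      · have hxL : (L:ℝ) ≤ x + 1 := by rw [hL]; exact (Nat.ceil_lt_add_one hx0.le).le
        have hxeq : x = (Real.log (Real.sqrt 2 * c₁) - Real.log ε)/(α * Real.log 2) := by
          rw [hx, Real.logb, Real.log_div (by positivity) (ne_of_gt hε)]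
          ring
        have hnum : Real.log (Real.sqrt 2 * c₁) - Real.log ε
            ≤ (max (Real.log (Real.sqrt 2 * c₁)) 0 + 1) * (-Real.log ε) := by
          have ha1 := le_max_left (Real.log (Real.sqrt 2 * c₁)) 0
          have ha2 := le_max_right (Real.log (Real.sqrt 2 * c₁)) 0
          nlinarith
        have hxb : x ≤ (max (Real.log (Real.sqrt 2 * c₁)) 0 + 1)/(α * Real.log 2)
            * (-Real.log ε) := by
          rw [hxeq, div_mul_eq_mul_div, div_le_div_iff₀ hlog2 hlog2]
          nlinarith [hnum, hlog2]
        calc (L:ℝ) + 1 ≤ x + 2 := by linarith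
          _ ≤ (max (Real.log (Real.sqrt 2 * c₁)) 0 + 1)/(α * Real.log 2) * (-Real.log ε)
              + 2 * (-Real.log ε) := by nlinarith [hxb]
          _ = A * (-Real.log ε) := by rw [hA]; ring
    -- assemble, proving the mean square error bound
    refine ⟨L, N, fun ℓ _ => hNpos ℓ, ?_, by rw [hS] at hcost; exact hcost, hL2, hL3⟩
    intro Y hY2 hInd hId
    set sfin : Finset ((_ : ℕ) × ℕ) := (range (L+1)).sigma (fun ℓ => range (N ℓ)) with hsfin
    have hmem : ∀ p : (Σ _ : ℕ, ℕ), p ∈ sfin → p.1 ≤ L ∧ p.2 < N p.1 := by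
      intro p hp
      rw [hsfin, Finset.mem_sigma, Finset.mem_range, Finset.mem_range] at hp
      exact ⟨Nat.lt_succ_iff.mp hp.1, hp.2⟩
    set X : (Σ _ : ℕ, ℕ) → Ω → ℝ := fun p ω => (1/(N p.1 : ℝ)) * Y p.1 p.2 ω with hX
    set Q : Ω → ℝ := fun ω => ∑ p ∈ sfin, X p ω with hQ
    have hQpt : ∀ ω, (∑ ℓ ∈ range (L+1), (1/(N ℓ : ℝ)) * ∑ n ∈ range (N ℓ), Y ℓ n ω)
        = Q ω := by
      intro ω
      rw [hQ]
      simp only [Finset.mul_sum]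
      rw [Finset.sum_sigma']
    have hId' : ∀ ℓ ≤ L, ∀ n < N ℓ, IdentDistrib (Y ℓ n) (diff ℓ) μ μ := hId
    have hXmem : ∀ p ∈ sfin, MemLp (X p) 2 μ := fun p hp =>
      (hY2 p.1 (hmem p hp).1 p.2 (hmem p hp).2).const_mul _
    have hQmem : MemLp Q 2 μ := memLp_finset_sum sfin hXmem
    have hQint : Integrable Q μ := hQmem.integrable one_le_two
    have hpair : Set.Pairwise ↑sfin (fun p q => IndepFun (X p) (X q) μ) := by
      intro p hp q hq hpq
      have hp' := hmem p (Finset.mem_coe.mp hp)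
      have hq' := hmem q (Finset.mem_coe.mp hq)
      have hne : (⟨(p.1, p.2), hp'⟩ : {q : ℕ × ℕ // q.1 ≤ L ∧ q.2 < N q.1})
          ≠ ⟨(q.1, q.2), hq'⟩ := by
        intro h
        apply hpq
        have h1' : (p.1, p.2) = (q.1, q.2) := congrArg Subtype.val h
        obtain ⟨pa, pb⟩ := p
        obtain ⟨qa, qb⟩ := q
        simp only [Prod.mk.injEq] at h1'
        simp [h1'.1, h1'.2]
      have h := hInd.indepFun hne
      exact h.comp (measurable_const_mul _) (measurable_const_mul _)
    have hvar : variance Q μ = ∑ p ∈ sfin, variance (X p) μ := by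
      have hsum : Q = ∑ p ∈ sfin, X p := by
        funext ω
        rw [hQ, Finset.sum_apply]
      rw [hsum]
      exact IndepFun.variance_sum hXmem hpair
    have hXvar : ∀ p ∈ sfin, variance (X p) μ
        = (1/(N p.1 : ℝ))^2 * variance (diff p.1) μ := by
      intro p hp
      have hv1 : variance (X p) μ = (1/(N p.1 : ℝ))^2 * variance (Y p.1 p.2) μ :=
        variance_const_mul _ _ μ
      rw [hv1, (hId' p.1 (hmem p hp).1 p.2 (hmem p hp).2).variance_eq]
    have hvar2 : variance Q μ
        = ∑ ℓ ∈ range (L+1), (N ℓ : ℝ) * ((1/(N ℓ : ℝ))^2 * variance (diff ℓ) μ) := by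
      rw [hvar, Finset.sum_congr rfl hXvar, hsfin, Finset.sum_sigma]
      refine Finset.sum_congr rfl fun ℓ _ => ?_
      simp [Finset.sum_const, Finset.card_range, nsmul_eq_mul]
    have hvarbound : variance Q μ ≤ ε ^ 2 / 2 := by
      rw [hvar2]
      refine le_trans (Finset.sum_le_sum ?_) hVsum
      intro ℓ _
      have hNl : (0:ℝ) < (N ℓ : ℝ) := by exact_mod_cast hNpos ℓ
      have hveq : (N ℓ : ℝ) * ((1/(N ℓ : ℝ))^2 * variance (diff ℓ) μ)
          = variance (diff ℓ) μ / (N ℓ : ℝ) := by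
        field_simp
      rw [hveq]
      have hvle : variance (diff ℓ) μ ≤ c₂ * (2:ℝ) ^ (-(β * ℓ)) := h2 ℓ
      gcongr
    -- mean of Q
    have hXint : ∀ p ∈ sfin, Integrable (X p) μ := fun p hp =>
      (hXmem p hp).integrable one_le_two
    have hEQ : ∫ ω, Q ω ∂μ = ∫ ω, Pl L ω ∂μ := by
      have h0 : ∫ ω, Q ω ∂μ = ∑ p ∈ sfin, ∫ ω, X p ω ∂μ := by
        rw [hQ]
        exact integral_finset_sum sfin hXint
      rw [h0]
      have h1' : ∀ p ∈ sfin, ∫ ω, X p ω ∂μ = (1/(N p.1 : ℝ)) * ∫ ω, diff p.1 ω ∂μ := by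
        intro p hp
        rw [hX]
        rw [integral_const_mul, (hId' p.1 (hmem p hp).1 p.2 (hmem p hp).2).integral_eq]
      rw [Finset.sum_congr rfl h1', hsfin, Finset.sum_sigma, ← htel L]
      refine Finset.sum_congr rfl fun ℓ _ => ?_
      simp only [Finset.sum_const, Finset.card_range, nsmul_eq_mul]
      have hNl : ((N ℓ : ℝ)) ≠ 0 := by
        have := hNpos ℓ
        positivity
      field_simp
    -- decomposition of the mean square error
    obtain ⟨m', hm'⟩ : ∃ m' : ℝ, m' = ∫ ω, Q ω ∂μ := ⟨_, rfl⟩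
    have hvar_eq : variance Q μ = ∫ ω, (Q ω - m')^2 ∂μ := by
      have h := variance_eq_integral hQmem.aestronglyMeasurable.aemeasurable
      rw [hm', h]
    have hzero : ∫ ω, (Q ω - m') ∂μ = 0 := by
      rw [integral_sub hQint (integrable_const _), integral_const]
      simp [hm']
    have hsq : Integrable (fun ω => (Q ω - m')^2) μ := by
      have h := (hQmem.sub (memLp_const m')).integrable_sq
      simpa using h
    have hint1 : Integrable (fun ω => (Q ω - m')) μ := hQint.sub (integrable_const _)
    have hint2 : Integrable (fun ω => (Q ω - m')^2 + (2*(m'-m))*(Q ω - m')) μ :=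
      hsq.add (hint1.const_mul _)
    have hexp : ∀ ω, (Q ω - m)^2 = ((Q ω - m')^2 + (2*(m' - m))*(Q ω - m')) + (m' - m)^2 :=
      fun ω => by ring
    have hdecomp : ∫ ω, (Q ω - m)^2 ∂μ = variance Q μ + (m' - m)^2 := by
      calc ∫ ω, (Q ω - m)^2 ∂μ
          = ∫ ω, (((Q ω - m')^2 + (2*(m'-m))*(Q ω - m')) + (m'-m)^2) ∂μ := by
            simp only [hexp]
        _ = (∫ ω, ((Q ω - m')^2 + (2*(m'-m))*(Q ω - m')) ∂μ) + (m'-m)^2 := by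
            rw [integral_add hint2 (integrable_const _), integral_const]
            simp
        _ = (∫ ω, (Q ω - m')^2 ∂μ) + (2*(m'-m)) * (∫ ω, (Q ω - m') ∂μ) + (m'-m)^2 := by
            rw [integral_add hsq (hint1.const_mul _), integral_const_mul]
        _ = variance Q μ + (m' - m)^2 := by rw [hzero, ← hvar_eq]; ring
    have habs : |m' - m| ≤ ε / Real.sqrt 2 := by
      rw [hm', hEQ]
      exact (hbias L).trans hbL
    have hsq2 : (m' - m)^2 ≤ ε^2/2 := by
      have hq2 : (m'-m)^2 ≤ (ε/Real.sqrt 2)^2 := by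
        rw [← sq_abs]
        exact pow_le_pow_left₀ (abs_nonneg _) habs 2
      have hq3 : (ε/Real.sqrt 2)^2 = ε^2/2 := by
        rw [div_pow, Real.sq_sqrt (by norm_num : (0:ℝ) ≤ 2)]
      linarith
    calc ∫ ω, ((∑ ℓ ∈ Finset.range (L + 1),
          (1 / (N ℓ : ℝ)) * ∑ n ∈ Finset.range (N ℓ), Y ℓ n ω) - ∫ ω', P ω' ∂μ) ^ 2 ∂μ
        = ∫ ω, (Q ω - m)^2 ∂μ := by
          simp only [hQpt]
          rw [hm]
      _ ≤ ε ^ 2 := by rw [hdecomp]; linarith [hvarbound, hsq2]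
  -- case analysis on β vs γ
  have hε1' : ∀ ε : ℝ, 0 < ε → ε < Real.exp (-1) → ε < 1 := by
    intro ε hε hεe
    have hlt : Real.exp (-1) < 1 := by
      rw [show (1:ℝ) = Real.exp 0 by simp]
      exact Real.exp_lt_exp.mpr (by norm_num)
    linarith
  have hM1' : ∀ ε : ℝ, 0 < ε → ε < Real.exp (-1) → 1 < -Real.log ε := by
    intro ε hε hεe
    have h := Real.log_lt_log hε hεe
    rw [Real.log_exp] at h
    linarith
  have hBγα : 0 < B ^ (γ/α) := Real.rpow_pos_of_pos hB0 _
  have htt : 0 < t/(t-1) := div_pos (by linarith) (by linarith)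
  rcases lt_trichotomy β γ with hbg | hbg | hbg
  · -- β < γ
    have hβ2α : β ≤ 2 * α := by
      rw [min_eq_left hbg.le] at hαβγ; linarith
    have hr1 : 1 < r := by
      rw [hr, show (1:ℝ) = (2:ℝ) ^ (0:ℝ) by simp]
      exact Real.rpow_lt_rpow_of_exponent_lt one_lt_two (by linarith)
    have hBθ : 0 < B ^ ((γ-β)/α) := Real.rpow_pos_of_pos hB0 _
    have hrr : 0 < (r/(r-1))^2 := pow_pos (div_pos (by linarith) (by linarith)) 2
    refine ⟨2 * c₂ * c₃ * (r/(r-1))^2 * B ^ ((γ-β)/α) + c₃ * (t/(t-1)) * B ^ (γ/α),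
      add_pos (mul_pos (mul_pos (by positivity) hrr) hBθ)
        (mul_pos (mul_pos hc₃ htt) hBγα), ?_⟩
    intro ε hε hεe
    obtain ⟨L, N, hpos, hmse, hcost, hL2, hL3⟩ := key ε hε hεe
    have hε1 : ε < 1 := hε1' ε hε hεe
    refine ⟨L, N, hpos, hmse, fun h => absurd h (not_lt.mpr hbg.le), fun h => absurd h hbg.ne, ?_⟩
    intro _
    have hBε : 0 < B / ε := by positivity
    have hε2 : (ε:ℝ) ^ (2:ℕ) = ε ^ ((2:ℝ)) := by
      rw [← Real.rpow_natCast ε 2]; norm_num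
    have hrL : r ^ L ≤ (B/ε) ^ ((γ-β)/(2*α)) := by
      have hh1 : r ^ L = ((2:ℝ)^(α*(L:ℝ))) ^ ((γ-β)/(2*α)) := by
        rw [hr, mlmc_pow_pow, ← Real.rpow_mul (by norm_num : (0:ℝ) ≤ 2)]
        congr 1
        field_simp
      rw [hh1]
      exact Real.rpow_le_rpow (Real.rpow_pos_of_pos two_pos _).le hL2
        (div_nonneg (by linarith) (by linarith))
    have htL : t ^ L ≤ (B/ε) ^ (γ/α) := by
      have hh1 : t ^ L = ((2:ℝ)^(α*(L:ℝ))) ^ (γ/α) := by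
        rw [ht, mlmc_pow_pow, ← Real.rpow_mul (by norm_num : (0:ℝ) ≤ 2)]
        congr 1
        field_simp
      rw [hh1]
      exact Real.rpow_le_rpow (Real.rpow_pos_of_pos two_pos _).le hL2 (by positivity)
    have hSsum : ∑ j ∈ range (L+1), r ^ j ≤ r/(r-1) * (B/ε) ^ ((γ-β)/(2*α)) := by
      rw [geom_sum_eq hr1.ne' (L+1)]
      have hh2 : (r ^ (L+1) - 1)/(r-1) ≤ r ^ (L+1)/(r-1) := by gcongr <;> linarith
      refine hh2.trans ?_
      have hh3 : r ^ (L+1) / (r-1) = r/(r-1) * r ^ L := by rw [pow_succ]; ring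
      rw [hh3]
      exact mul_le_mul_of_nonneg_left hrL (div_pos hrpos (by linarith)).le
    have hTsum : ∑ j ∈ range (L+1), t ^ j ≤ t/(t-1) * (B/ε) ^ (γ/α) := by
      rw [geom_sum_eq ht1.ne' (L+1)]
      have hh2 : (t ^ (L+1) - 1)/(t-1) ≤ t ^ (L+1)/(t-1) := by gcongr <;> linarith
      refine hh2.trans ?_
      have hh3 : t ^ (L+1) / (t-1) = t/(t-1) * t ^ L := by rw [pow_succ]; ring
      rw [hh3]
      exact mul_le_mul_of_nonneg_left htL (div_pos (by linarith) (by linarith)).le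
    have hSnn : (0:ℝ) ≤ ∑ j ∈ range (L+1), r ^ j :=
      Finset.sum_nonneg fun j _ => (pow_pos hrpos j).le
    have hS2 : (∑ j ∈ range (L+1), r ^ j) ^ 2 ≤ (r/(r-1))^2 * (B/ε) ^ ((γ-β)/α) := by
      have hh1 := pow_le_pow_left₀ hSnn hSsum 2
      refine hh1.trans (le_of_eq ?_)
      rw [mul_pow, ← Real.rpow_natCast ((B/ε) ^ ((γ-β)/(2*α))) 2, ← Real.rpow_mul hBε.le]
      congr 1
      field_simp
      ring
    have hconv1 : (B/ε) ^ ((γ-β)/α) / ε ^ 2 = B ^ ((γ-β)/α) * ε ^ (-2 - (γ-β)/α) := by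
      rw [Real.div_rpow hB0.le hε.le, hε2, div_div, ← Real.rpow_add hε, div_eq_mul_inv,
        ← Real.rpow_neg hε.le]
      congr 1
      ring
    have hexp : -2 - (γ-β)/α ≤ -(γ/α) := by
      have hh1 : γ/α = β/α + (γ-β)/α := by ring
      have hh2 : β/α ≤ 2 := (div_le_iff₀ hα).mpr (by linarith)
      linarith
    have hconv2 : (B/ε) ^ (γ/α) ≤ B ^ (γ/α) * ε ^ (-2 - (γ-β)/α) := by
      rw [Real.div_rpow hB0.le hε.le, div_eq_mul_inv, ← Real.rpow_neg hε.le]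
      exact mul_le_mul_of_nonneg_left
        (Real.rpow_le_rpow_of_exponent_ge hε hε1.le hexp)
        (Real.rpow_pos_of_pos hB0 _).le
    have hS2' : (∑ j ∈ range (L+1), r ^ j) ^ 2 / ε ^ 2
        ≤ (r/(r-1))^2 * (B ^ ((γ-β)/α) * ε ^ (-2 - (γ-β)/α)) := by
      have hh1 : (∑ j ∈ range (L+1), r ^ j) ^ 2 / ε ^ 2
          ≤ (r/(r-1))^2 * (B/ε) ^ ((γ-β)/α) / ε ^ 2 := by gcongr
      refine hh1.trans (le_of_eq ?_)
      rw [mul_div_assoc, hconv1]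
    have hT' : ∑ j ∈ range (L+1), t ^ j
        ≤ t/(t-1) * (B ^ (γ/α) * ε ^ (-2 - (γ-β)/α)) :=
      hTsum.trans (mul_le_mul_of_nonneg_left hconv2 htt.le)
    calc ∑ ℓ ∈ Finset.range (L + 1), (N ℓ : ℝ) * C ℓ
        ≤ 2 * c₂ * c₃ * (∑ j ∈ range (L+1), r ^ j) ^ 2 / ε ^ 2
          + c₃ * ∑ j ∈ range (L+1), t ^ j := hcost
      _ ≤ 2 * c₂ * c₃ * ((r/(r-1))^2 * (B ^ ((γ-β)/α) * ε ^ (-2 - (γ-β)/α)))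
          + c₃ * (t/(t-1) * (B ^ (γ/α) * ε ^ (-2 - (γ-β)/α))) := by
          rw [mul_div_assoc]
          exact add_le_add (mul_le_mul_of_nonneg_left hS2' (by positivity))
            (mul_le_mul_of_nonneg_left hT' hc₃.le)
      _ = (2 * c₂ * c₃ * (r/(r-1))^2 * B ^ ((γ-β)/α) + c₃ * (t/(t-1)) * B ^ (γ/α))
          * ε ^ (-2 - (γ-β)/α) := by ring
  · -- β = γ
    have hγ2α : γ ≤ 2 * α := by
      rw [hbg, min_self] at hαβγ; linarith
    have hr1 : r = 1 := by rw [hr, hbg]; norm_num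
    have hA2pos : (0:ℝ) < A^2 := pow_pos (by linarith) 2
    refine ⟨2 * c₂ * c₃ * A^2 + c₃ * (t/(t-1)) * B ^ (γ/α),
      add_pos (mul_pos (by positivity) hA2pos)
        (mul_pos (mul_pos hc₃ htt) hBγα), ?_⟩
    intro ε hε hεe
    obtain ⟨L, N, hpos, hmse, hcost, hL2, hL3⟩ := key ε hε hεe
    have hε1 : ε < 1 := hε1' ε hε hεe
    have hM1 : 1 < -Real.log ε := hM1' ε hε hεe
    refine ⟨L, N, hpos, hmse, fun h => absurd h (by rw [hbg]; exact lt_irrefl γ), ?_,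
      fun h => absurd h (by rw [hbg]; exact lt_irrefl γ)⟩
    intro _
    have hBε : 0 < B / ε := by positivity
    have hε2 : (ε:ℝ) ^ (2:ℕ) = ε ^ ((2:ℝ)) := by
      rw [← Real.rpow_natCast ε 2]; norm_num
    have hεn : ε ^ (-2:ℝ) = (ε ^ 2)⁻¹ := by
      rw [Real.rpow_neg hε.le, hε2]
    have hSeq : ∑ j ∈ range (L+1), r ^ j = (L:ℝ) + 1 := by
      simp [hr1, Finset.card_range]
    have htL : t ^ L ≤ (B/ε) ^ (γ/α) := by
      have hh1 : t ^ L = ((2:ℝ)^(α*(L:ℝ))) ^ (γ/α) := by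
        rw [ht, mlmc_pow_pow, ← Real.rpow_mul (by norm_num : (0:ℝ) ≤ 2)]
        congr 1
        field_simp
      rw [hh1]
      exact Real.rpow_le_rpow (Real.rpow_pos_of_pos two_pos _).le hL2 (by positivity)
    have hTsum : ∑ j ∈ range (L+1), t ^ j ≤ t/(t-1) * (B/ε) ^ (γ/α) := by
      rw [geom_sum_eq ht1.ne' (L+1)]
      have hh2 : (t ^ (L+1) - 1)/(t-1) ≤ t ^ (L+1)/(t-1) := by gcongr <;> linarith
      refine hh2.trans ?_
      have hh3 : t ^ (L+1) / (t-1) = t/(t-1) * t ^ L := by rw [pow_succ]; ring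
      rw [hh3]
      exact mul_le_mul_of_nonneg_left htL (div_pos (by linarith) (by linarith)).le
    have hconv2 : (B/ε) ^ (γ/α) ≤ B ^ (γ/α) * ε ^ (-2:ℝ) := by
      rw [Real.div_rpow hB0.le hε.le, div_eq_mul_inv, ← Real.rpow_neg hε.le]
      refine mul_le_mul_of_nonneg_left ?_ (Real.rpow_pos_of_pos hB0 _).le
      refine Real.rpow_le_rpow_of_exponent_ge hε hε1.le ?_
      have hh2 : γ/α ≤ 2 := (div_le_iff₀ hα).mpr (by linarith)
      linarith
    have hM2 : 1 ≤ (-Real.log ε)^2 := by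
      have h := pow_le_pow_left₀ (by norm_num : (0:ℝ) ≤ 1) hM1.le 2
      simpa using h
    have hLM : ((L:ℝ)+1)^2 ≤ A^2 * (-Real.log ε)^2 := by
      have h0 : (0:ℝ) ≤ (L:ℝ)+1 := by positivity
      have h := pow_le_pow_left₀ h0 hL3 2
      rwa [mul_pow] at h
    have hh1 : 2 * c₂ * c₃ * (∑ j ∈ range (L+1), r ^ j) ^ 2 / ε ^ 2
        ≤ 2 * c₂ * c₃ * A^2 * ε ^ (-2:ℝ) * (-Real.log ε)^2 := by
      rw [hSeq, hεn]
      calc 2 * c₂ * c₃ * ((L:ℝ)+1) ^ 2 / ε ^ 2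
          ≤ 2 * c₂ * c₃ * (A^2 * (-Real.log ε)^2) / ε ^ 2 := by gcongr
        _ = 2 * c₂ * c₃ * A^2 * (ε^2)⁻¹ * (-Real.log ε)^2 := by ring
    have hh2 : c₃ * ∑ j ∈ range (L+1), t ^ j
        ≤ c₃ * (t/(t-1)) * B ^ (γ/α) * ε ^ (-2:ℝ) * (-Real.log ε)^2 := by
      have ha := hTsum.trans (mul_le_mul_of_nonneg_left hconv2 htt.le)
      have hb : c₃ * ∑ j ∈ range (L+1), t ^ j
          ≤ c₃ * (t/(t-1) * (B ^ (γ/α) * ε ^ (-2:ℝ))) := mul_le_mul_of_nonneg_left ha hc₃.le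
      refine hb.trans ?_
      have hc' : 0 ≤ c₃ * (t/(t-1) * (B ^ (γ/α) * ε ^ (-2:ℝ))) := by
        have h1'' := Real.rpow_pos_of_pos hB0 (γ/α)
        have h2'' : (0:ℝ) < ε ^ (-2:ℝ) := Real.rpow_pos_of_pos hε _
        positivity
      calc c₃ * (t/(t-1) * (B ^ (γ/α) * ε ^ (-2:ℝ)))
          ≤ c₃ * (t/(t-1) * (B ^ (γ/α) * ε ^ (-2:ℝ))) * (-Real.log ε)^2 :=
            le_mul_of_one_le_right hc' hM2
        _ = c₃ * (t/(t-1)) * B ^ (γ/α) * ε ^ (-2:ℝ) * (-Real.log ε)^2 := by ring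
    calc ∑ ℓ ∈ Finset.range (L + 1), (N ℓ : ℝ) * C ℓ
        ≤ _ := hcost
      _ ≤ 2 * c₂ * c₃ * A^2 * ε ^ (-2:ℝ) * (-Real.log ε)^2
          + c₃ * (t/(t-1)) * B ^ (γ/α) * ε ^ (-2:ℝ) * (-Real.log ε)^2 := add_le_add hh1 hh2
      _ = (2 * c₂ * c₃ * A^2 + c₃ * (t/(t-1)) * B ^ (γ/α)) * ε ^ (-2:ℝ)
          * Real.log ε ^ 2 := by
          rw [show (-Real.log ε)^2 = Real.log ε ^2 from neg_sq _]
          ring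
  · -- β > γ
    have hγ2α : γ ≤ 2 * α := by
      rw [min_eq_right hbg.le] at hαβγ; linarith
    have hr1 : r < 1 := by
      rw [hr]
      exact Real.rpow_lt_one_of_one_lt_of_neg one_lt_two (by linarith)
    have hrr : 0 < (1/(1-r))^2 := pow_pos (div_pos one_pos (by linarith)) 2
    refine ⟨2 * c₂ * c₃ * (1/(1-r))^2 + c₃ * (t/(t-1)) * B ^ (γ/α),
      add_pos (mul_pos (by positivity) hrr) (mul_pos (mul_pos hc₃ htt) hBγα), ?_⟩
    intro ε hε hεe
    obtain ⟨L, N, hpos, hmse, hcost, hL2, hL3⟩ := key ε hε hεe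
    have hε1 : ε < 1 := hε1' ε hε hεe
    refine ⟨L, N, hpos, hmse, ?_, fun h => absurd h hbg.ne', fun h => absurd h (not_lt.mpr hbg.le)⟩
    intro _
    have hε2 : (ε:ℝ) ^ (2:ℕ) = ε ^ ((2:ℝ)) := by
      rw [← Real.rpow_natCast ε 2]; norm_num
    have hεn : ε ^ (-2:ℝ) = (ε ^ 2)⁻¹ := by
      rw [Real.rpow_neg hε.le, hε2]
    have hSb : ∑ j ∈ range (L+1), r ^ j ≤ 1/(1-r) := by
      rw [geom_sum_eq hr1.ne (L+1)]
      have he : (r ^ (L+1) - 1)/(r-1) = (1 - r ^ (L+1))/(1-r) := by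
        rw [div_eq_div_iff (by linarith) (by linarith)]
        ring
      rw [he]
      have hp : 0 ≤ r ^ (L+1) := (pow_pos hrpos _).le
      gcongr
      · linarith
    have htL : t ^ L ≤ (B/ε) ^ (γ/α) := by
      have hh1 : t ^ L = ((2:ℝ)^(α*(L:ℝ))) ^ (γ/α) := by
        rw [ht, mlmc_pow_pow, ← Real.rpow_mul (by norm_num : (0:ℝ) ≤ 2)]
        congr 1
        field_simp
      rw [hh1]
      exact Real.rpow_le_rpow (Real.rpow_pos_of_pos two_pos _).le hL2 (by positivity)
    have hTsum : ∑ j ∈ range (L+1), t ^ j ≤ t/(t-1) * (B/ε) ^ (γ/α) := by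
      rw [geom_sum_eq ht1.ne' (L+1)]
      have hh2 : (t ^ (L+1) - 1)/(t-1) ≤ t ^ (L+1)/(t-1) := by gcongr <;> linarith
      refine hh2.trans ?_
      have hh3 : t ^ (L+1) / (t-1) = t/(t-1) * t ^ L := by rw [pow_succ]; ring
      rw [hh3]
      exact mul_le_mul_of_nonneg_left htL (div_pos (by linarith) (by linarith)).le
    have hconv2 : (B/ε) ^ (γ/α) ≤ B ^ (γ/α) * ε ^ (-2:ℝ) := by
      rw [Real.div_rpow hB0.le hε.le, div_eq_mul_inv, ← Real.rpow_neg hε.le]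
      refine mul_le_mul_of_nonneg_left ?_ (Real.rpow_pos_of_pos hB0 _).le
      refine Real.rpow_le_rpow_of_exponent_ge hε hε1.le ?_
      have hh2 : γ/α ≤ 2 := (div_le_iff₀ hα).mpr (by linarith)
      linarith
    have hSnn : (0:ℝ) ≤ ∑ j ∈ range (L+1), r ^ j :=
      Finset.sum_nonneg fun j _ => (pow_pos hrpos j).le
    have hh1 : 2 * c₂ * c₃ * (∑ j ∈ range (L+1), r ^ j) ^ 2 / ε ^ 2
        ≤ 2 * c₂ * c₃ * (1/(1-r))^2 * ε ^ (-2:ℝ) := by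
      rw [hεn]
      have hs2 : (∑ j ∈ range (L+1), r ^ j)^2 ≤ (1/(1-r))^2 := pow_le_pow_left₀ hSnn hSb 2
      calc 2 * c₂ * c₃ * (∑ j ∈ range (L+1), r ^ j) ^ 2 / ε ^ 2
          ≤ 2 * c₂ * c₃ * (1/(1-r))^2 / ε ^ 2 := by gcongr
        _ = 2 * c₂ * c₃ * (1/(1-r))^2 * (ε^2)⁻¹ := by ring
    have hh2 : c₃ * ∑ j ∈ range (L+1), t ^ j
        ≤ c₃ * (t/(t-1)) * B ^ (γ/α) * ε ^ (-2:ℝ) := by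
      have ha := hTsum.trans (mul_le_mul_of_nonneg_left hconv2 htt.le)
      have hb := mul_le_mul_of_nonneg_left ha hc₃.le
      refine hb.trans (le_of_eq ?_)
      ring
    calc ∑ ℓ ∈ Finset.range (L + 1), (N ℓ : ℝ) * C ℓ
        ≤ _ := hcost
      _ ≤ 2 * c₂ * c₃ * (1/(1-r))^2 * ε ^ (-2:ℝ)
          + c₃ * (t/(t-1)) * B ^ (γ/α) * ε ^ (-2:ℝ) := add_le_add hh1 hh2
      _ = (2 * c₂ * c₃ * (1/(1-r))^2 + c₃ * (t/(t-1)) * B ^ (γ/α)) * ε ^ (-2:ℝ) := by ring
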